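/- arXiv:1109.2345 — 4 statements merged into one kernel-verified Lean document; each statement's English description precedes it below -/
import Mathlib

section
/- For $1<\alpha<2$, the sequence $q_m = (m+2)^{3-\alpha} - 4(m+1)^{3-\alpha} + 6 m^{3-\alpha} - 4(m-1)^{3-\alpha} + (m-2)^{3-\alpha}$, defined for integers $m \geq 2$, is nonincreasing: $q_{m+1} \leq q_m$ for all $m \geq 2$. -/
open Set

/-- Derivative of a shifted real power. -/
lemma qaux_hasDerivAt_shift (p c : ℝ) {x : ℝ} (hx : x + c ≠ 0) :
    HasDerivAt (fun y : ℝ => (y + c) ^ p) (p * (x + c) ^ (p - 1)) x := by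
  have h := (Real.hasDerivAt_rpow_const (x := x + c) (p := p) (Or.inl hx)).comp x
    ((hasDerivAt_id x).add_const c)
  simpa [Function.comp_def] using h

/-- Second difference of `x ^ (-α)` is nonneg on `(0, ∞)` (convexity-type fact). -/
lemma qaux_bracket_nonneg (α : ℝ) (h1 : 1 < α) {x : ℝ} (hx : 0 < x) :
    0 ≤ (x + 2) ^ (-α) - 2 * (x + 1) ^ (-α) + x ^ (-α) := by
  set d : ℝ → ℝ := fun y => (y + 1) ^ (-α) - y ^ (-α) with hd
  have hder : ∀ y ∈ Ioi (0:ℝ),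
      HasDerivAt d ((-α) * (y + 1) ^ (-α - 1) - (-α) * y ^ (-α - 1)) y := by
    intro y hy
    have hy0 : 0 < y := hy
    have h1' := qaux_hasDerivAt_shift (-α) 1 (by positivity : y + 1 ≠ 0)
    have h2' := Real.hasDerivAt_rpow_const (x := y) (p := -α) (Or.inl hy0.ne')
    exact h1'.sub h2'
  have hmono : MonotoneOn d (Ioi 0) := by
    apply monotoneOn_of_deriv_nonneg (convex_Ioi 0)
    · intro y hy
      exact ((hder y hy).continuousAt).continuousWithinAt
    · rw [interior_Ioi]
      intro y hy
      exact ((hder y hy).differentiableAt).differentiableWithinAt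
    · rw [interior_Ioi]
      intro y hy
      rw [(hder y hy).deriv]
      have hle : (y + 1) ^ (-α - 1) ≤ y ^ (-α - 1) :=
        Real.rpow_le_rpow_of_nonpos hy (by linarith) (by linarith)
      nlinarith [hle]
  have hkey : d x ≤ d (x + 1) := hmono hx (by simp only [mem_Ioi]; linarith) (by linarith)
  have e1 : x + 1 + 1 = x + 2 := by ring
  simp only [hd, e1] at hkey
  linarith

/-- Third difference of `x ^ (1-α)` is nonpos on `(0, ∞)`. -/
lemma qaux_third_nonpos (α : ℝ) (h1 : 1 < α) {x : ℝ} (hx : 0 < x) :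
    (x + 3) ^ (1 - α) - 3 * (x + 2) ^ (1 - α) + 3 * (x + 1) ^ (1 - α) - x ^ (1 - α) ≤ 0 := by
  set w : ℝ → ℝ := fun y => (y + 2) ^ (1 - α) - 2 * (y + 1) ^ (1 - α) + y ^ (1 - α) with hw
  have hder : ∀ y ∈ Ioi (0:ℝ),
      HasDerivAt w ((1 - α) * (y + 2) ^ (1 - α - 1)
        - 2 * ((1 - α) * (y + 1) ^ (1 - α - 1)) + (1 - α) * y ^ (1 - α - 1)) y := by
    intro y hy
    have hy0 : 0 < y := hy
    have h2' := qaux_hasDerivAt_shift (1 - α) 2 (by positivity : y + 2 ≠ 0)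
    have h1' := qaux_hasDerivAt_shift (1 - α) 1 (by positivity : y + 1 ≠ 0)
    have h0' := Real.hasDerivAt_rpow_const (x := y) (p := 1 - α) (Or.inl hy0.ne')
    exact (h2'.sub (h1'.const_mul 2)).add h0'
  have hanti : AntitoneOn w (Ioi 0) := by
    apply antitoneOn_of_deriv_nonpos (convex_Ioi 0)
    · intro y hy
      exact ((hder y hy).continuousAt).continuousWithinAt
    · rw [interior_Ioi]
      intro y hy
      exact ((hder y hy).differentiableAt).differentiableWithinAt
    · rw [interior_Ioi]
      intro y hy
      rw [(hder y hy).deriv]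
      have hb := qaux_bracket_nonneg α h1 (show (0:ℝ) < y from hy)
      have he : 1 - α - 1 = -α := by ring
      rw [he]
      nlinarith [hb]
  have hkey : w (x + 1) ≤ w x := hanti hx (by simp only [mem_Ioi]; linarith) (by linarith)
  have e1 : x + 1 + 2 = x + 3 := by ring
  have e2 : x + 1 + 1 = x + 2 := by ring
  simp only [hw, e1, e2] at hkey
  linarith

/-- The third difference of `x ^ (3-α)` is concave on `[0, ∞)`. -/
lemma qaux_u_concave (α : ℝ) (h1 : 1 < α) (h2 : α < 2) :
    ConcaveOn ℝ (Ici 0) (fun x : ℝ =>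
      (x + 3) ^ (3 - α) - 3 * (x + 2) ^ (3 - α) + 3 * (x + 1) ^ (3 - α) - x ^ (3 - α)) := by
  have h3 : (0:ℝ) < 3 - α := by linarith
  set u : ℝ → ℝ := fun x =>
      (x + 3) ^ (3 - α) - 3 * (x + 2) ^ (3 - α) + 3 * (x + 1) ^ (3 - α) - x ^ (3 - α) with hu
  set u' : ℝ → ℝ := fun x =>
      (3 - α) * (x + 3) ^ (3 - α - 1) - 3 * ((3 - α) * (x + 2) ^ (3 - α - 1))
        + 3 * ((3 - α) * (x + 1) ^ (3 - α - 1)) - (3 - α) * x ^ (3 - α - 1) with hu'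
  set u'' : ℝ → ℝ := fun x =>
      (3 - α) * ((3 - α - 1) * (x + 3) ^ (3 - α - 1 - 1))
        - 3 * ((3 - α) * ((3 - α - 1) * (x + 2) ^ (3 - α - 1 - 1)))
        + 3 * ((3 - α) * ((3 - α - 1) * (x + 1) ^ (3 - α - 1 - 1)))
        - (3 - α) * ((3 - α - 1) * x ^ (3 - α - 1 - 1)) with hu''
  have hD1 : ∀ y ∈ Ioi (0:ℝ), HasDerivAt u (u' y) y := by
    intro y hy
    have hy0 : 0 < y := hy
    have h3' := qaux_hasDerivAt_shift (3 - α) 3 (by positivity : y + 3 ≠ 0)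
    have h2' := qaux_hasDerivAt_shift (3 - α) 2 (by positivity : y + 2 ≠ 0)
    have h1' := qaux_hasDerivAt_shift (3 - α) 1 (by positivity : y + 1 ≠ 0)
    have h0' := Real.hasDerivAt_rpow_const (x := y) (p := 3 - α) (Or.inl hy0.ne')
    exact ((h3'.sub (h2'.const_mul 3)).add (h1'.const_mul 3)).sub h0'
  have hD2 : ∀ y ∈ Ioi (0:ℝ), HasDerivAt u' (u'' y) y := by
    intro y hy
    have hy0 : 0 < y := hy
    have h3' := (qaux_hasDerivAt_shift (3 - α - 1) 3
      (by positivity : y + 3 ≠ 0)).const_mul (3 - α)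
    have h2' := ((qaux_hasDerivAt_shift (3 - α - 1) 2
      (by positivity : y + 2 ≠ 0)).const_mul (3 - α)).const_mul 3
    have h1' := ((qaux_hasDerivAt_shift (3 - α - 1) 1
      (by positivity : y + 1 ≠ 0)).const_mul (3 - α)).const_mul 3
    have h0' := (Real.hasDerivAt_rpow_const (x := y)
      (p := 3 - α - 1) (Or.inl hy0.ne')).const_mul (3 - α)
    exact ((h3'.sub h2').add h1').sub h0'
  have hderiv_eq : ∀ y ∈ Ioi (0:ℝ), deriv u y = u' y := fun y hy => (hD1 y hy).deriv
  have hcont : ContinuousOn u (Ici 0) := by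
    have hc : Continuous u := by
      have base : Continuous (fun x : ℝ => x ^ (3 - α)) :=
        Real.continuous_rpow_const h3.le
      have c3 : Continuous (fun x : ℝ => (x + 3) ^ (3 - α)) :=
        base.comp (continuous_id.add continuous_const)
      have c2 : Continuous (fun x : ℝ => (x + 2) ^ (3 - α)) :=
        base.comp (continuous_id.add continuous_const)
      have c1 : Continuous (fun x : ℝ => (x + 1) ^ (3 - α)) :=
        base.comp (continuous_id.add continuous_const)
      exact ((c3.sub ((continuous_const).mul c2)).add ((continuous_const).mul c1)).sub base
    exact hc.continuousOn
  apply concaveOn_of_deriv2_nonpos (convex_Ici 0) hcont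
  · rw [interior_Ici]
    intro y hy
    exact ((hD1 y hy).differentiableAt).differentiableWithinAt
  · rw [interior_Ici]
    intro y hy
    have hEv : deriv u =ᶠ[nhds y] u' :=
      Filter.eventuallyEq_of_mem (isOpen_Ioi.mem_nhds hy) hderiv_eq
    have : DifferentiableAt ℝ u' y := (hD2 y hy).differentiableAt
    exact (hEv.differentiableAt_iff.mpr this).differentiableWithinAt
  · rw [interior_Ici]
    intro y hy
    have hEv : deriv u =ᶠ[nhds y] u' :=
      Filter.eventuallyEq_of_mem (isOpen_Ioi.mem_nhds hy) hderiv_eq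
    have h2d : deriv (deriv u) y = u'' y := by
      rw [hEv.deriv_eq]
      exact (hD2 y hy).deriv
    have hit : deriv^[2] u y = deriv (deriv u) y := by
      simp [Function.iterate_succ, Function.comp]
    rw [hit, h2d]
    have hv := qaux_third_nonpos α h1 (show (0:ℝ) < y from hy)
    have hy0 : 0 < y := hy
    have he : 3 - α - 1 - 1 = 1 - α := by ring
    simp only [hu'', he]
    have hc : 0 ≤ (3 - α) * (3 - α - 1) := by nlinarith
    nlinarith [mul_nonneg hc (le_of_lt hy0), mul_nonpos_of_nonneg_of_nonpos hc hv]

/-- Midpoint inequality for the third difference of `x ^ (3-α)`. -/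
lemma qaux_mid (α : ℝ) (h1 : 1 < α) (h2 : α < 2) {n : ℝ} (hn : 0 ≤ n) :
    ((n + 3) ^ (3 - α) - 3 * (n + 2) ^ (3 - α) + 3 * (n + 1) ^ (3 - α) - n ^ (3 - α))
      + ((n + 5) ^ (3 - α) - 3 * (n + 4) ^ (3 - α) + 3 * (n + 3) ^ (3 - α)
          - (n + 2) ^ (3 - α))
      ≤ 2 * ((n + 4) ^ (3 - α) - 3 * (n + 3) ^ (3 - α) + 3 * (n + 2) ^ (3 - α)
          - (n + 1) ^ (3 - α)) := by
  have hconc := qaux_u_concave α h1 h2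
  have hmem1 : n ∈ Ici (0:ℝ) := hn
  have hmem2 : n + 2 ∈ Ici (0:ℝ) := by simp only [mem_Ici]; linarith
  have h := hconc.2 hmem1 hmem2 (by norm_num : (0:ℝ) ≤ 1/2) (by norm_num : (0:ℝ) ≤ 1/2)
    (by norm_num)
  simp only [smul_eq_mul] at h
  have e0 : (1/2 : ℝ) * n + (1/2) * (n + 2) = n + 1 := by ring
  rw [e0] at h
  have e1 : n + 1 + 3 = n + 4 := by ring
  have e2 : n + 1 + 2 = n + 3 := by ring
  have e3 : n + 1 + 1 = n + 2 := by ring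
  have e4 : n + 2 + 3 = n + 5 := by ring
  have e5 : n + 2 + 2 = n + 4 := by ring
  have e6 : n + 2 + 1 = n + 3 := by ring
  simp only [e1, e2, e3, e4, e5, e6] at h
  linarith

theorem q_antitone (α : ℝ) (h1 : 1 < α) (h2 : α < 2)
    (q : ℕ → ℝ)
    (hq : ∀ m : ℕ, q m = ((m : ℝ) + 2) ^ (3 - α) - 4 * ((m : ℝ) + 1) ^ (3 - α)
        + 6 * (m : ℝ) ^ (3 - α) - 4 * ((m : ℝ) - 1) ^ (3 - α) + ((m : ℝ) - 2) ^ (3 - α)) :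
    ∀ m : ℕ, 2 ≤ m → q (m + 1) ≤ q m := by
  intro m hm
  have hm2 : (2:ℝ) ≤ (m:ℝ) := by exact_mod_cast hm
  have hn : (0:ℝ) ≤ (m:ℝ) - 2 := by linarith
  have h := qaux_mid α h1 h2 hn
  have e1 : (m:ℝ) - 2 + 3 = (m:ℝ) + 1 := by ring
  have e2 : (m:ℝ) - 2 + 2 = (m:ℝ) := by ring
  have e3 : (m:ℝ) - 2 + 1 = (m:ℝ) - 1 := by ring
  have e4 : (m:ℝ) - 2 + 5 = (m:ℝ) + 3 := by ring
  have e5 : (m:ℝ) - 2 + 4 = (m:ℝ) + 2 := by ring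
  simp only [e1, e2, e3, e4, e5] at h
  rw [hq (m + 1), hq m]
  push_cast
  have f1 : (m:ℝ) + 1 + 2 = (m:ℝ) + 3 := by ring
  have f2 : (m:ℝ) + 1 + 1 = (m:ℝ) + 2 := by ring
  have f3 : (m:ℝ) + 1 - 1 = (m:ℝ) := by ring
  have f4 : (m:ℝ) + 1 - 2 = (m:ℝ) - 1 := by ring
  simp only [f1, f2, f3, f4]
  linarith
end

section
/- For $1<\alpha<2$, define $q_{-1} = 1$, $q_0 = 2^{3-\alpha} - 4$, $q_1 = 3^{3-\alpha} - 4\cdot 2^{3-\alpha} + 6$, and for $m \geq 2$, $q_m = (m+2)^{3-\alpha} - 4(m+1)^{3-\alpha} + 6 m^{3-\alpha} - 4(m-1)^{3-\alpha} + (m-2)^{3-\alpha}$. Then $\sum_{m=-1}^{\infty} q_m = 0$. -/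
/-- `Q n` is the coefficient `q_{n-1}` of the spline discretization of the
Riemann-Liouville derivative, indexed so that `Q 0 = q_{-1}`. -/
noncomputable def Q (α : ℝ) : ℕ → ℝ
  | 0 => 1
  | 1 => (2 : ℝ) ^ (3 - α) - 4
  | 2 => (3 : ℝ) ^ (3 - α) - 4 * (2 : ℝ) ^ (3 - α) + 6
  | (n + 3) =>
      (((n : ℝ) + 2) + 2) ^ (3 - α) - 4 * (((n : ℝ) + 2) + 1) ^ (3 - α)
        + 6 * ((n : ℝ) + 2) ^ (3 - α) - 4 * (((n : ℝ) + 2) - 1) ^ (3 - α)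
        + (((n : ℝ) + 2) - 2) ^ (3 - α)

open Set Filter Finset Topology

/-- convexity of `x ^ q` on `(0,∞)` for `q ≤ 0`. -/
lemma convexOn_rpow_nonpos {q : ℝ} (hq : q ≤ 0) :
    ConvexOn ℝ (Set.Ioi (0:ℝ)) fun x : ℝ => x ^ q := by
  apply convexOn_of_hasDerivWithinAt2_nonneg (convex_Ioi 0)
    (f' := fun x => q * x ^ (q - 1)) (f'' := fun x => q * ((q - 1) * x ^ (q - 2)))
  · intro x hx
    exact (Real.continuousAt_rpow_const x q (Or.inl (ne_of_gt hx))).continuousWithinAt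
  · rw [interior_Ioi]
    intro x hx
    exact (Real.hasDerivAt_rpow_const (Or.inl (ne_of_gt hx))).hasDerivWithinAt
  · rw [interior_Ioi]
    intro x hx
    have h := ((Real.hasDerivAt_rpow_const (p := q - 1)
      (Or.inl (ne_of_gt hx))).const_mul q)
    rw [show q - 1 - 1 = q - 2 by ring] at h
    exact h.hasDerivWithinAt
  · rw [interior_Ioi]
    intro x hx
    have h1 : (0:ℝ) ≤ x ^ (q - 2) := Real.rpow_nonneg (le_of_lt hx) _
    have h2 : (0:ℝ) ≤ q * (q - 1) := by nlinarith
    calc (0:ℝ) ≤ q * (q - 1) * x ^ (q - 2) := mul_nonneg h2 h1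
      _ = q * ((q - 1) * x ^ (q - 2)) := by ring

section Dlemmas

variable {p : ℝ}

/-- The second-difference function. -/
noncomputable def Dfun (p : ℝ) : ℝ → ℝ := fun x => (x + 1) ^ p - 2 * x ^ p + (x - 1) ^ p

lemma Dfun_convex (hp1 : 1 < p) (hp2 : p < 2) :
    ConvexOn ℝ (Set.Ici (1:ℝ)) (Dfun p) := by
  have hp0 : (0:ℝ) ≤ p := by linarith
  apply convexOn_of_hasDerivWithinAt2_nonneg (convex_Ici 1)
    (f' := fun x => 1 * p * (x + 1) ^ (p - 1) - 2 * (1 * p * x ^ (p - 1))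
      + 1 * p * (x - 1) ^ (p - 1))
    (f'' := fun x => 1 * (p - 1) * (x + 1) ^ (p - 2) * p
      - 2 * (1 * (p - 1) * x ^ (p - 2) * p) + 1 * (p - 1) * (x - 1) ^ (p - 2) * p)
  · have c1 : Continuous fun x : ℝ => (x + 1) ^ p :=
      (continuous_id.add continuous_const).rpow_const (fun _ => Or.inr hp0)
    have c2 : Continuous fun x : ℝ => 2 * x ^ p :=
      continuous_const.mul (continuous_id.rpow_const (fun _ => Or.inr hp0))
    have c3 : Continuous fun x : ℝ => (x - 1) ^ p :=
      (continuous_id.sub continuous_const).rpow_const (fun _ => Or.inr hp0)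
    exact ((c1.sub c2).add c3).continuousOn
  · rw [interior_Ici]
    intro x hx
    have d1 : HasDerivAt (fun x : ℝ => (x + 1) ^ p) (1 * p * (x + 1) ^ (p - 1)) x :=
      ((hasDerivAt_id x).add_const 1).rpow_const (Or.inr (le_of_lt hp1))
    have d2 : HasDerivAt (fun x : ℝ => x ^ p) (1 * p * x ^ (p - 1)) x :=
      (hasDerivAt_id x).rpow_const (Or.inr (le_of_lt hp1))
    have d3 : HasDerivAt (fun x : ℝ => (x - 1) ^ p) (1 * p * (x - 1) ^ (p - 1)) x :=
      ((hasDerivAt_id x).sub_const 1).rpow_const (Or.inr (le_of_lt hp1))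
    exact (((d1.sub (d2.const_mul 2)).add d3)).hasDerivWithinAt
  · rw [interior_Ici]
    intro x hx
    have hx1 : (0:ℝ) < x + 1 := by simp only [Set.mem_Ioi] at hx; linarith
    have hx2 : (0:ℝ) < x := by simp only [Set.mem_Ioi] at hx; linarith
    have hx3 : (0:ℝ) < x - 1 := by simp only [Set.mem_Ioi] at hx; linarith
    have d1 : HasDerivAt (fun x : ℝ => (x + 1) ^ (p - 1))
        (1 * (p - 1) * (x + 1) ^ (p - 1 - 1)) x :=
      ((hasDerivAt_id x).add_const 1).rpow_const (Or.inl (ne_of_gt hx1))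
    have d2 : HasDerivAt (fun x : ℝ => x ^ (p - 1))
        (1 * (p - 1) * x ^ (p - 1 - 1)) x :=
      (hasDerivAt_id x).rpow_const (Or.inl (ne_of_gt hx2))
    have d3 : HasDerivAt (fun x : ℝ => (x - 1) ^ (p - 1))
        (1 * (p - 1) * (x - 1) ^ (p - 1 - 1)) x :=
      ((hasDerivAt_id x).sub_const 1).rpow_const (Or.inl (ne_of_gt hx3))
    have := (((d1.const_mul (1 * p)).sub ((d2.const_mul (1 * p)).const_mul 2)).add
      (d3.const_mul (1 * p)))
    have heq : p - 1 - 1 = p - 2 := by ring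
    rw [heq] at this
    convert this.hasDerivWithinAt using 1
    all_goals (first | rfl | ring)
  · rw [interior_Ici]
    intro x hx
    have hx1 : (0:ℝ) < x + 1 := by simp only [Set.mem_Ioi] at hx; linarith
    have hx3 : (0:ℝ) < x - 1 := by simp only [Set.mem_Ioi] at hx; linarith
    -- midpoint convexity of t ^ (p-2)
    have hcv := convexOn_rpow_nonpos (q := p - 2) (by linarith)
    have key := hcv.2 (Set.mem_Ioi.mpr hx3) (Set.mem_Ioi.mpr hx1)
      (by norm_num : (0:ℝ) ≤ 1/2) (by norm_num : (0:ℝ) ≤ 1/2) (by norm_num)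
    simp only [smul_eq_mul] at key
    have harg : (1/2 : ℝ) * (x - 1) + (1/2 : ℝ) * (x + 1) = x := by ring
    rw [harg] at key
    have hpp : (0:ℝ) ≤ (p - 1) * p := by nlinarith
    nlinarith [key, hpp]

lemma Dfun_nonneg (hp1 : 1 ≤ p) {x : ℝ} (hx : 1 ≤ x) : 0 ≤ Dfun p x := by
  have hcv := convexOn_rpow (p := p) hp1
  have key := hcv.2 (Set.mem_Ici.mpr (by linarith : (0:ℝ) ≤ x - 1))
    (Set.mem_Ici.mpr (by linarith : (0:ℝ) ≤ x + 1))
    (by norm_num : (0:ℝ) ≤ 1/2) (by norm_num : (0:ℝ) ≤ 1/2) (by norm_num)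
  simp only [smul_eq_mul] at key
  have harg : (1/2 : ℝ) * (x - 1) + (1/2 : ℝ) * (x + 1) = x := by ring
  rw [harg] at key
  unfold Dfun
  nlinarith [key]

lemma Dfun_le (hp1 : 1 < p) (hp2 : p < 2) {x : ℝ} (hx : 2 ≤ x) :
    Dfun p x ≤ 2 * (x - 1) ^ (p - 2) := by
  have hx1 : (0:ℝ) < x + 1 := by linarith
  have hx2 : (0:ℝ) < x := by linarith
  have hx3 : (0:ℝ) < x - 1 := by linarith
  set γ : ℝ := p - 1 with hγ
  have hγ0 : 0 < γ := by simp [hγ]; linarith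
  have hγ1 : γ < 1 := by simp [hγ]; linarith
  -- split x^p = x^γ * x
  have esplit : ∀ t : ℝ, 0 < t → t ^ p = t ^ γ * t := by
    intro t ht
    have : p = γ + 1 := by simp [hγ]
    rw [this, Real.rpow_add_one (ne_of_gt ht)]
  -- concavity midpoint for γ
  have hcc := Real.concaveOn_rpow (p := γ) (le_of_lt hγ0) (le_of_lt hγ1)
  have key := hcc.2 (Set.mem_Ici.mpr (le_of_lt hx3)) (Set.mem_Ici.mpr (le_of_lt hx1))
    (by norm_num : (0:ℝ) ≤ 1/2) (by norm_num : (0:ℝ) ≤ 1/2) (by norm_num)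
  simp only [smul_eq_mul] at key
  have harg : (1/2 : ℝ) * (x - 1) + (1/2 : ℝ) * (x + 1) = x := by ring
  rw [harg] at key
  -- key : 1/2*(x-1)^γ + 1/2*(x+1)^γ ≤ x^γ
  -- slope inequality
  have hslope := hcc.slope_anti_adjacent (Set.mem_Ici.mpr (le_refl (0:ℝ)))
    (Set.mem_Ici.mpr (le_of_lt hx1)) hx3 (by linarith : x - 1 < x + 1)
  rw [Real.zero_rpow (by positivity : γ ≠ 0)] at hslope
  -- hslope : ((x+1)^γ - (x-1)^γ) / ((x+1)-(x-1)) ≤ ((x-1)^γ - 0)/((x-1)-0)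
  have hdenom : (x + 1) - (x - 1) = 2 := by ring
  rw [hdenom, sub_zero, sub_zero] at hslope
  have hdiv : (x - 1) ^ γ / (x - 1) = (x - 1) ^ (p - 2) := by
    rw [show p - 2 = γ - 1 from by rw [hγ]; ring, Real.rpow_sub_one (ne_of_gt hx3) γ]
  rw [hdiv] at hslope
  have hs2 : (x + 1) ^ γ - (x - 1) ^ γ ≤ 2 * (x - 1) ^ (p - 2) := by
    have := (div_le_iff₀ (by norm_num : (0:ℝ) < 2)).mp hslope
    linarith
  have hDeq : Dfun p x = x * ((x + 1) ^ γ - 2 * x ^ γ + (x - 1) ^ γ)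
      + ((x + 1) ^ γ - (x - 1) ^ γ) := by
    unfold Dfun
    rw [esplit _ hx1, esplit _ hx2, esplit _ hx3]
    ring
  have hneg : x * ((x + 1) ^ γ - 2 * x ^ γ + (x - 1) ^ γ) ≤ 0 := by
    apply mul_nonpos_of_nonneg_of_nonpos (le_of_lt hx2)
    nlinarith [key]
  linarith [hDeq, hneg, hs2]

end Dlemmas

theorem q_total_sum (α : ℝ) (h1 : 1 < α) (h2 : α < 2) :
    HasSum (Q α) 0 := by
  set p : ℝ := 3 - α with hpdef
  have hp1 : 1 < p := by simp [hpdef]; linarith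
  have hp2 : p < 2 := by simp [hpdef]; linarith
  have hp0 : p ≠ 0 := by intro h; rw [h] at hp1; norm_num at hp1
  set G : ℕ → ℝ := fun k =>
    ((k:ℝ) + 2) ^ p - 3 * ((k:ℝ) + 1) ^ p + 3 * (k:ℝ) ^ p - ((k:ℝ) - 1) ^ p with hGdef
  -- Q in terms of Dfun
  have hQD : ∀ n : ℕ, Q α (n + 3) =
      Dfun p ((n:ℝ) + 3) - 2 * Dfun p ((n:ℝ) + 2) + Dfun p ((n:ℝ) + 1) := by
    intro n
    show (((n : ℝ) + 2) + 2) ^ p - 4 * (((n : ℝ) + 2) + 1) ^ p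
        + 6 * ((n : ℝ) + 2) ^ p - 4 * (((n : ℝ) + 2) - 1) ^ p
        + (((n : ℝ) + 2) - 2) ^ p = _
    unfold Dfun
    ring_nf
  -- nonnegativity of the tail coefficients
  have hQnonneg : ∀ n : ℕ, 0 ≤ Q α (n + 3) := by
    intro n
    have hcv := Dfun_convex hp1 hp2
    have hn0 : (0:ℝ) ≤ (n:ℝ) := Nat.cast_nonneg n
    have key := hcv.2 (Set.mem_Ici.mpr (by linarith : (1:ℝ) ≤ (n:ℝ) + 1))
      (Set.mem_Ici.mpr (by linarith : (1:ℝ) ≤ (n:ℝ) + 3))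
      (by norm_num : (0:ℝ) ≤ 1/2) (by norm_num : (0:ℝ) ≤ 1/2) (by norm_num)
    simp only [smul_eq_mul] at key
    have harg : (1/2 : ℝ) * ((n:ℝ) + 1) + (1/2 : ℝ) * ((n:ℝ) + 3) = (n:ℝ) + 2 := by ring
    rw [harg] at key
    rw [hQD n]
    linarith [key]
  -- partial sum formula
  have hsum : ∀ k : ℕ, ∑ n ∈ Finset.range (k + 3), Q α n = G (k + 1) := by
    intro k
    induction k with
    | zero =>
      show ∑ n ∈ Finset.range 3, Q α n = G 1
      rw [Finset.sum_range_succ, Finset.sum_range_succ, Finset.sum_range_one]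
      show (1:ℝ) + ((2:ℝ) ^ p - 4) + ((3:ℝ) ^ p - 4 * (2:ℝ) ^ p + 6) = _
      simp only [hGdef]
      push_cast
      rw [show ((1:ℝ) + 2) = 3 by norm_num, show ((1:ℝ) + 1) = 2 by norm_num,
        show ((1:ℝ) - 1) = 0 by norm_num, Real.one_rpow, Real.zero_rpow hp0]
      ring
    | succ k ih =>
      rw [show k + 1 + 3 = (k + 3) + 1 from rfl, Finset.sum_range_succ, ih, hQD k]
      simp only [hGdef]
      unfold Dfun
      push_cast
      ring_nf
  -- the bound sequence tends to zero
  have hDtend : Tendsto (fun k : ℕ => Dfun p ((k:ℝ) + 2)) atTop (𝓝 0) := by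
    have hb : Tendsto (fun k : ℕ => 2 * ((k:ℝ) + 1) ^ (p - 2)) atTop (𝓝 0) := by
      have h0 : Tendsto (fun x : ℝ => x ^ (p - 2)) atTop (𝓝 0) := by
        have := tendsto_rpow_neg_atTop (y := 2 - p) (by linarith)
        simpa [neg_sub] using this
      have h1 : Tendsto (fun k : ℕ => (k:ℝ) + 1) atTop atTop :=
        tendsto_atTop_add_const_right _ 1 tendsto_natCast_atTop_atTop
      have := (h0.comp h1).const_mul (2:ℝ)
      simpa using this
    apply squeeze_zero (fun k => Dfun_nonneg (le_of_lt hp1)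
      (by have : (0:ℝ) ≤ (k:ℝ) := Nat.cast_nonneg k; linarith))
      (fun k => ?_) hb
    have := Dfun_le hp1 hp2 (x := (k:ℝ) + 2)
      (by have : (0:ℝ) ≤ (k:ℝ) := Nat.cast_nonneg k; linarith)
    rw [show ((k:ℝ) + 2) - 1 = (k:ℝ) + 1 by ring] at this
    exact this
  -- G tends to zero
  have hGtend : Tendsto (fun k : ℕ => G (k + 1)) atTop (𝓝 0) := by
    have hshift : Tendsto (fun k : ℕ => Dfun p ((k:ℝ) + 3)) atTop (𝓝 0) := by
      have := hDtend.comp (tendsto_add_atTop_nat 1)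
      have heq : (fun k : ℕ => Dfun p ((k:ℝ) + 3))
          = (fun k : ℕ => Dfun p ((k:ℝ) + 2)) ∘ (fun k => k + 1) := by
        funext k; simp only [Function.comp_apply]; push_cast; ring_nf
      rw [heq]; exact this
    have heq : ∀ k : ℕ, G (k + 2) = Dfun p ((k:ℝ) + 3) - Dfun p ((k:ℝ) + 2) := by
      intro k
      simp only [hGdef]
      unfold Dfun
      push_cast
      ring_nf
    have hG2 : Tendsto (fun k : ℕ => G (k + 2)) atTop (𝓝 0) := by
      simp only [heq]
      simpa using hshift.sub hDtend
    rw [← tendsto_add_atTop_iff_nat 1]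
    exact hG2
  -- partial sums tend to zero
  have hptend : Tendsto (fun N : ℕ => ∑ n ∈ Finset.range N, Q α n) atTop (𝓝 0) := by
    rw [← tendsto_add_atTop_iff_nat 3]
    have : (fun N : ℕ => ∑ n ∈ Finset.range (N + 3), Q α n) = fun k => G (k + 1) := by
      funext k; exact hsum k
    rw [this]
    exact hGtend
  -- G (k+1) is monotone, hence ≤ 0
  have hGstep : ∀ k : ℕ, G (k + 2) = G (k + 1) + Q α (k + 3) := by
    intro k
    have h1 := hsum (k + 1)
    have h2 := hsum k
    rw [show k + 1 + 3 = (k + 3) + 1 from rfl, Finset.sum_range_succ, h2] at h1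
    linarith [h1]
  have hGmono : Monotone (fun k : ℕ => G (k + 1)) := by
    apply monotone_nat_of_le_succ
    intro k
    have h := hGstep k
    have h0 := hQnonneg k
    show G (k + 1) ≤ G (k + 1 + 1)
    calc G (k + 1) ≤ G (k + 1) + Q α (k + 3) := by linarith
      _ = G (k + 2) := (hGstep k).symm
      _ = G (k + 1 + 1) := rfl
  have hGle : ∀ k : ℕ, G (k + 1) ≤ 0 := fun k => hGmono.ge_of_tendsto hGtend k
  -- summability
  have hbound : ∀ n : ℕ, ∑ i ∈ Finset.range n, Q α (i + 3) ≤ -G 1 := by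
    intro n
    have hps : ∑ i ∈ Finset.range n, Q α (i + 3) = G (n + 1) - G 1 := by
      induction n with
      | zero => simp
      | succ n ih =>
        rw [Finset.sum_range_succ, ih, show n + 1 + 1 = n + 2 from rfl, hGstep n]
        ring
    rw [hps]
    linarith [hGle n]
  have hs3 : Summable (fun n : ℕ => Q α (n + 3)) :=
    summable_of_sum_range_le hQnonneg hbound
  have hs : Summable (Q α) := (summable_nat_add_iff 3).mp hs3
  have h0 : ∑' n, Q α n = 0 :=
    tendsto_nhds_unique hs.hasSum.tendsto_sum_nat hptend
  have := hs.hasSum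
  rwa [h0] at this
end

section
/- For $1<\alpha<2$ and any $\theta \in \mathbb{R}$, the coefficients $q_{-1}=1$, $q_0 = 2^{3-\alpha}-4$, $q_1 = 3^{3-\alpha} - 4\cdot 2^{3-\alpha}+6$ and $q_m$ (fourth differences of $x^{3-\alpha}$, for $m\geq 2$) satisfy $\sum_{m=-1}^{\infty} q_m \cos(m\theta) \leq 0$. -/
open Set Real

/-- Convexity of `x ^ q` on `(0,∞)` for negative `q`. -/
lemma convexOn_rpow_neg {q : ℝ} (hq : q < 0) :
    ConvexOn ℝ (Set.Ioi (0:ℝ)) (fun x : ℝ => x ^ q) := by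
  have hderiv : ∀ x ∈ Set.Ioi (0:ℝ), deriv (fun y : ℝ => y ^ q) x = q * x ^ (q - 1) := by
    intro x hx
    exact Real.deriv_rpow_const _ _
  apply convexOn_of_deriv2_nonneg (convex_Ioi 0)
  · exact fun x hx =>
      (Real.differentiableAt_rpow_const_of_ne q (ne_of_gt hx)).continuousAt.continuousWithinAt
  · rw [interior_Ioi]
    exact fun x hx =>
      (Real.differentiableAt_rpow_const_of_ne q (ne_of_gt hx)).differentiableWithinAt
  · rw [interior_Ioi]
    intro x hx
    have heq : deriv (fun y : ℝ => y ^ q) =ᶠ[nhds x] fun y : ℝ => q * y ^ (q - 1) := by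
      filter_upwards [Ioi_mem_nhds hx] with y hy using
        Real.deriv_rpow_const _ _
    have hdiff : DifferentiableAt ℝ (fun y : ℝ => q * y ^ (q - 1)) x :=
      (Real.differentiableAt_rpow_const_of_ne (q - 1) (ne_of_gt hx)).const_mul q
    exact (hdiff.congr_of_eventuallyEq heq).differentiableWithinAt
  · rw [interior_Ioi]
    intro x hx
    have heq : deriv (fun y : ℝ => y ^ q) =ᶠ[nhds x] fun y : ℝ => q * y ^ (q - 1) := by
      filter_upwards [Ioi_mem_nhds hx] with y hy using
        Real.deriv_rpow_const _ _
    have h2 : deriv^[2] (fun y : ℝ => y ^ q) x = q * ((q-1) * x ^ (q - 1 - 1)) := by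
      rw [Function.iterate_succ, Function.iterate_one, Function.comp_apply]
      rw [Filter.EventuallyEq.deriv_eq heq]
      rw [deriv_const_mul _ (Real.differentiableAt_rpow_const_of_ne (q-1) (ne_of_gt hx))]
      rw [Real.deriv_rpow_const _ _]
    rw [h2]
    have := Real.rpow_nonneg (le_of_lt hx) (q - 1 - 1)
    nlinarith [mul_nonneg (mul_nonneg (by linarith : (0:ℝ) ≤ -q) (by linarith : (0:ℝ) ≤ -(q-1))) this]

/-- midpoint concavity of `x ^ p` for `0 < p < 1`. -/
lemma midpoint_concave {p : ℝ} (hp0 : 0 < p) (hp1 : p < 1) {x : ℝ} (hx : 0 ≤ x) :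
    (x+2) ^ p + x ^ p ≤ 2 * (x+1) ^ p := by
  have h := (Real.strictConcaveOn_rpow hp0 hp1).concaveOn.2
    (Set.mem_Ici.2 hx) (Set.mem_Ici.2 (by linarith : (0:ℝ) ≤ x + 2))
    (by norm_num : (0:ℝ) ≤ 1/2) (by norm_num : (0:ℝ) ≤ 1/2) (by norm_num)
  rw [smul_eq_mul, smul_eq_mul, smul_eq_mul, smul_eq_mul] at h
  have hb : (1/2 : ℝ) * x + 1/2 * (x + 2) = x + 1 := by ring
  rw [hb] at h
  linarith

/-- midpoint convexity of `x ^ q` for `q < 0` on positives. -/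
lemma midpoint_convex_neg {q : ℝ} (hq : q < 0) {x : ℝ} (hx : 0 < x) :
    2 * (x+1) ^ q ≤ (x+2) ^ q + x ^ q := by
  have h := (convexOn_rpow_neg hq).2
    (Set.mem_Ioi.2 hx) (Set.mem_Ioi.2 (by linarith : (0:ℝ) < x + 2))
    (by norm_num : (0:ℝ) ≤ 1/2) (by norm_num : (0:ℝ) ≤ 1/2) (by norm_num)
  rw [smul_eq_mul, smul_eq_mul, smul_eq_mul, smul_eq_mul] at h
  have hb : (1/2 : ℝ) * x + 1/2 * (x + 2) = x + 1 := by ring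
  rw [hb] at h
  linarith

noncomputable def Faux (s : ℝ) : ℝ → ℝ := fun x => (x+2) ^ s - 2*(x+1) ^ s + x ^ s

noncomputable def Faux' (s : ℝ) : ℝ → ℝ :=
  fun x => s * ((x+2) ^ (s-1) - 2*(x+1) ^ (s-1) + x ^ (s-1))

lemma hasDerivAt_Faux {s : ℝ} (hs1 : 1 ≤ s) (x : ℝ) : HasDerivAt (Faux s) (Faux' s x) x := by
  have h2 : HasDerivAt (fun y : ℝ => (y+2) ^ s) (s * (x+2) ^ (s-1)) x := by
    have := (Real.hasDerivAt_rpow_const (x := x + 2) (p := s) (Or.inr hs1)).comp x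
      ((hasDerivAt_id x).add_const 2)
    simpa [Function.comp_def] using this
  have h1 : HasDerivAt (fun y : ℝ => (y+1) ^ s) (s * (x+1) ^ (s-1)) x := by
    have := (Real.hasDerivAt_rpow_const (x := x + 1) (p := s) (Or.inr hs1)).comp x
      ((hasDerivAt_id x).add_const 1)
    simpa [Function.comp_def] using this
  have h0 : HasDerivAt (fun y : ℝ => y ^ s) (s * x ^ (s-1)) x :=
    Real.hasDerivAt_rpow_const (Or.inr hs1)
  have h := (h2.sub (h1.const_mul 2)).add h0
  convert h using 1
  all_goals try rfl
  unfold Faux'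
  ring

lemma Faux_antitoneOn {s : ℝ} (hs1 : 1 < s) (hs2 : s < 2) :
    AntitoneOn (Faux s) (Set.Ici 0) := by
  have hdiff : Differentiable ℝ (Faux s) := fun x => (hasDerivAt_Faux hs1.le x).differentiableAt
  apply antitoneOn_of_deriv_nonpos (convex_Ici 0) hdiff.continuous.continuousOn
    hdiff.differentiableOn
  intro x hx
  rw [interior_Ici] at hx
  rw [(hasDerivAt_Faux hs1.le x).deriv]
  unfold Faux'
  have hmid := midpoint_concave (by linarith : (0:ℝ) < s - 1) (by linarith : s - 1 < 1)
    (le_of_lt hx)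
  have hs0 : (0:ℝ) ≤ s := by linarith
  nlinarith

lemma Faux_convexOn {s : ℝ} (hs1 : 1 < s) (hs2 : s < 2) :
    ConvexOn ℝ (Set.Ici 0) (Faux s) := by
  have hdiff : Differentiable ℝ (Faux s) := fun x => (hasDerivAt_Faux hs1.le x).differentiableAt
  have hderiv : deriv (Faux s) = Faux' s := funext fun x => (hasDerivAt_Faux hs1.le x).deriv
  have hF' : ∀ x : ℝ, 0 < x → HasDerivAt (Faux' s)
      (s * ((s-1) * (x+2) ^ (s-1-1) - 2*((s-1) * (x+1) ^ (s-1-1)) + (s-1) * x ^ (s-1-1))) x := by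
    intro x hx
    have h2 : HasDerivAt (fun y : ℝ => (y+2) ^ (s-1)) ((s-1) * (x+2) ^ (s-1-1)) x := by
      have := (Real.hasDerivAt_rpow_const (x := x + 2) (p := s-1)
        (Or.inl (by linarith : x + 2 ≠ 0))).comp x ((hasDerivAt_id x).add_const 2)
      simpa [Function.comp_def] using this
    have h1 : HasDerivAt (fun y : ℝ => (y+1) ^ (s-1)) ((s-1) * (x+1) ^ (s-1-1)) x := by
      have := (Real.hasDerivAt_rpow_const (x := x + 1) (p := s-1)
        (Or.inl (by linarith : x + 1 ≠ 0))).comp x ((hasDerivAt_id x).add_const 1)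
      simpa [Function.comp_def] using this
    have h0 : HasDerivAt (fun y : ℝ => y ^ (s-1)) ((s-1) * x ^ (s-1-1)) x :=
      Real.hasDerivAt_rpow_const (Or.inl (ne_of_gt hx))
    exact ((h2.sub (h1.const_mul 2)).add h0).const_mul s
  apply convexOn_of_deriv2_nonneg (convex_Ici 0) hdiff.continuous.continuousOn
    hdiff.differentiableOn
  · rw [interior_Ici, hderiv]
    exact fun x hx => ((hF' x hx).differentiableAt).differentiableWithinAt
  · rw [interior_Ici]
    intro x hx
    rw [Function.iterate_succ, Function.iterate_one, Function.comp_apply, hderiv,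
      (hF' x hx).deriv]
    have hmid := midpoint_convex_neg (by linarith : s - 1 - 1 < 0) hx
    have hs0 : (0:ℝ) ≤ s := by linarith
    have hs10 : (0:ℝ) ≤ s - 1 := by linarith
    nlinarith [mul_le_mul_of_nonneg_left hmid (mul_nonneg hs0 hs10)]

lemma q02_nonneg {s : ℝ} (hs1 : 1 < s) (hs2 : s < 2) :
    0 ≤ 1 + ((3:ℝ) ^ s - 4 * (2:ℝ) ^ s + 6) := by
  set G : ℝ → ℝ := fun x => (3:ℝ) ^ x - 4 * (2:ℝ) ^ x with hG
  have hd : ∀ x : ℝ, HasDerivAt G ((3:ℝ) ^ x * Real.log 3 - 4 * ((2:ℝ) ^ x * Real.log 2)) x := by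
    intro x
    exact ((Real.hasStrictDerivAt_const_rpow (by norm_num : (0:ℝ) < 3) x).hasDerivAt).sub
      (((Real.hasStrictDerivAt_const_rpow (by norm_num : (0:ℝ) < 2) x).hasDerivAt).const_mul 4)
  have hdiff : Differentiable ℝ G := fun x => (hd x).differentiableAt
  have hlog : (9:ℝ) * Real.log 3 ≤ 16 * Real.log 2 := by
    have h := Real.log_le_log (by norm_num : (0:ℝ) < 3 ^ (9:ℕ))
      (by norm_num : ((3:ℝ) ^ (9:ℕ)) ≤ (2:ℝ) ^ (16:ℕ))
    rwa [Real.log_pow, Real.log_pow] at h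
  have hanti : AntitoneOn G (Set.Icc 1 2) := by
    apply antitoneOn_of_deriv_nonpos (convex_Icc 1 2) hdiff.continuous.continuousOn
      hdiff.differentiableOn
    intro x hx
    rw [interior_Icc] at hx
    rw [(hd x).deriv]
    have h32 : (3:ℝ) ^ x = (2:ℝ) ^ x * ((3:ℝ)/2) ^ x := by
      rw [← Real.mul_rpow (by norm_num) (by norm_num)]
      norm_num
    have hle : ((3:ℝ)/2) ^ x ≤ ((3:ℝ)/2) ^ (2:ℝ) :=
      Real.rpow_le_rpow_of_exponent_le (by norm_num) hx.2.le
    have hval : ((3:ℝ)/2) ^ (2:ℝ) = 9/4 := by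
      rw [show (2:ℝ) = ((2:ℕ):ℝ) by norm_num, Real.rpow_natCast]
      norm_num
    rw [hval] at hle
    have h2x : (0:ℝ) < (2:ℝ) ^ x := Real.rpow_pos_of_pos (by norm_num) x
    have hlog3 : (0:ℝ) ≤ Real.log 3 := Real.log_nonneg (by norm_num)
    rw [h32]
    nlinarith [mul_le_mul_of_nonneg_left hle (mul_nonneg h2x.le hlog3),
      mul_le_mul_of_nonneg_left hlog h2x.le]
  have h2mem : (2:ℝ) ∈ Set.Icc (1:ℝ) 2 := by norm_num
  have hsmem : s ∈ Set.Icc (1:ℝ) 2 := ⟨hs1.le, hs2.le⟩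
  have := hanti hsmem h2mem hs2.le
  have hG2 : G 2 = -7 := by
    have h3 : (3:ℝ) ^ (2:ℝ) = 9 := by
      rw [show (2:ℝ) = ((2:ℕ):ℝ) by norm_num, Real.rpow_natCast]; norm_num
    have h2 : (2:ℝ) ^ (2:ℝ) = 4 := by
      rw [show (2:ℝ) = ((2:ℕ):ℝ) by norm_num, Real.rpow_natCast]; norm_num
    simp only [hG, h3, h2]; norm_num
  rw [hG2] at this
  simp only [hG] at this
  linarith

lemma sum_split3 (g : ℕ → ℝ) (n : ℕ) :
    ∑ i ∈ Finset.range (n+3), g i = g 0 + g 1 + g 2 + ∑ i ∈ Finset.range n, g (i+3) := by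
  induction n with
  | zero => simp [Finset.sum_range_succ]
  | succ n ih => rw [Finset.sum_range_succ, ih, Finset.sum_range_succ]; ring


lemma Q_succ3 (α : ℝ) (n : ℕ) :
    Q α (n+3) = Faux (3-α) ((n:ℝ)+2) - 2 * Faux (3-α) ((n:ℝ)+1) + Faux (3-α) (n:ℝ) := by
  simp only [Q, Faux]
  rw [show (n:ℝ)+2+2 = ((n:ℝ)+2)+2 from by ring,
    show (n:ℝ)+1+2 = ((n:ℝ)+2)+1 from by ring,
    show (n:ℝ)+1+1 = ((n:ℝ)+2) from by ring]
  ring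

noncomputable def Taux (s : ℝ) (N : ℕ) : ℝ := Faux s ((N:ℝ)+1) - Faux s (N:ℝ)

lemma sum_Q (α : ℝ) (h2 : α < 2) (N : ℕ) :
    ∑ i ∈ Finset.range (N+3), Q α i = Taux (3-α) N := by
  have hs0 : (3 - α) ≠ 0 := by linarith
  induction N with
  | zero =>
      simp only [Finset.sum_range_succ, Finset.sum_range_zero, Q, Taux, Faux]
      norm_num [Real.zero_rpow hs0, Real.one_rpow]
      ring
  | succ N ih =>
      rw [show N+1+3 = (N+3)+1 from by ring, Finset.sum_range_succ, ih, Q_succ3]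
      unfold Taux
      rw [Nat.cast_succ]
      rw [show (N:ℝ)+1+1 = (N:ℝ)+2 from by ring]
      ring

lemma Taux_nonpos {α : ℝ} (h1 : 1 < α) (h2 : α < 2) (N : ℕ) : Taux (3-α) N ≤ 0 := by
  have hs1 : 1 < 3 - α := by linarith
  have hs2 : 3 - α < 2 := by linarith
  have h := Faux_antitoneOn hs1 hs2 (Set.mem_Ici.2 (Nat.cast_nonneg N))
    (Set.mem_Ici.2 (by positivity : (0:ℝ) ≤ (N:ℝ)+1)) (by linarith)
  unfold Taux
  linarith

lemma Q_succ3_nonneg {α : ℝ} (h1 : 1 < α) (h2 : α < 2) (n : ℕ) : 0 ≤ Q α (n+3) := by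
  have hs1 : 1 < 3 - α := by linarith
  have hs2 : 3 - α < 2 := by linarith
  rw [Q_succ3]
  have h := (Faux_convexOn hs1 hs2).2 (Set.mem_Ici.2 (Nat.cast_nonneg n))
    (Set.mem_Ici.2 (by positivity : (0:ℝ) ≤ (n:ℝ)+2))
    (by norm_num : (0:ℝ) ≤ 1/2) (by norm_num : (0:ℝ) ≤ 1/2) (by norm_num)
  rw [smul_eq_mul, smul_eq_mul, smul_eq_mul, smul_eq_mul,
    show (1/2:ℝ) * (n:ℝ) + 1/2 * ((n:ℝ)+2) = (n:ℝ)+1 from by ring] at h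
  linarith

theorem cos_weighted_sum_nonpos (α : ℝ) (h1 : 1 < α) (h2 : α < 2) (θ : ℝ) :
    (∑' n : ℕ, Q α n * Real.cos (((n : ℝ) - 1) * θ)) ≤ 0 := by
  have hs1 : 1 < 3 - α := by linarith
  have hs2 : 3 - α < 2 := by linarith
  have hQpos : ∀ n : ℕ, 0 ≤ Q α (n+3) := Q_succ3_nonneg h1 h2
  -- summability of Q
  have hsum3 : Summable (fun n => Q α (n+3)) := by
    apply summable_of_sum_range_le (c := -Taux (3-α) 0) hQpos
    intro n
    have hsplit := sum_split3 (Q α) n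
    have h0 := sum_Q α h2 0
    have hn := sum_Q α h2 n
    have hT := Taux_nonpos h1 h2 n
    simp only [Finset.sum_range_succ, Finset.sum_range_zero] at h0
    rw [hsplit] at hn
    linarith
  have hQsum : Summable (Q α) := (summable_nat_add_iff 3).mp hsum3
  have hcossum : Summable (fun n : ℕ => Q α n * Real.cos (((n : ℝ) - 1) * θ)) := by
    apply Summable.of_norm_bounded hQsum.abs
    intro n
    rw [Real.norm_eq_abs, abs_mul]
    exact mul_le_of_le_one_right (abs_nonneg _) (Real.abs_cos_le_one _)
  apply le_of_tendsto hcossum.hasSum.tendsto_sum_nat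
  rw [Filter.eventually_atTop]
  refine ⟨3, fun N hN => ?_⟩
  obtain ⟨M, rfl⟩ := Nat.exists_eq_add_of_le hN
  rw [Nat.add_comm 3 M]
  rw [sum_split3]
  have h02 : 0 ≤ Q α 0 + Q α 2 := by
    simp only [Q]
    have := q02_nonneg hs1 hs2
    linarith
  have hb02 : Q α 0 * Real.cos ((((0:ℕ):ℝ) - 1) * θ) + Q α 2 * Real.cos ((((2:ℕ):ℝ) - 1) * θ)
      ≤ Q α 0 + Q α 2 := by
    rw [show (((0:ℕ):ℝ) - 1) * θ = -θ from by push_cast; ring,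
      show (((2:ℕ):ℝ) - 1) * θ = θ from by push_cast; ring, Real.cos_neg]
    have := mul_le_mul_of_nonneg_left (Real.cos_le_one θ) h02
    nlinarith [Real.cos_le_one θ]
  have hb1 : Q α 1 * Real.cos ((((1:ℕ):ℝ) - 1) * θ) = Q α 1 := by
    rw [show (((1:ℕ):ℝ) - 1) * θ = 0 from by push_cast; ring, Real.cos_zero, mul_one]
  have hbtail : ∑ i ∈ Finset.range M, Q α (i+3) * Real.cos (((((i+3:ℕ)):ℝ) - 1) * θ)
      ≤ ∑ i ∈ Finset.range M, Q α (i+3) := by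
    apply Finset.sum_le_sum
    intro i _
    have := mul_le_mul_of_nonneg_left (Real.cos_le_one (((((i+3:ℕ)):ℝ) - 1) * θ)) (hQpos i)
    linarith
  have hsum := sum_Q α h2 M
  rw [sum_split3] at hsum
  have hT := Taux_nonpos h1 h2 M
  linarith
end

section
/- For $1<\alpha<2$, the series $\sum_{m=2}^{\infty} |q_m|$ with $q_m = (m+2)^{3-\alpha} - 4(m+1)^{3-\alpha} + 6 m^{3-\alpha} - 4(m-1)^{3-\alpha} + (m-2)^{3-\alpha}$ converges; consequently, for any bounded sequence $(u_m)_{m \geq -1}$ of reals, the series $\sum_{m=-1}^{\infty} q_m u_m$ converges absolutely. -/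
open Set Real

lemma mvt_rpow (s a b : ℝ) (ha : 0 < a) (hab : a < b) :
    ∃ c ∈ Set.Ioo a b, b ^ s - a ^ s = s * c ^ (s - 1) * (b - a) := by
  have hcont : ContinuousOn (fun x : ℝ => x ^ s) (Set.Icc a b) := by
    apply ContinuousOn.rpow_const continuousOn_id
    intro x hx
    exact Or.inl (ne_of_gt (lt_of_lt_of_le ha hx.1))
  have hderiv : ∀ x ∈ Set.Ioo a b, HasDerivAt (fun x : ℝ => x ^ s) (s * x ^ (s - 1)) x := by
    intro x hx
    exact Real.hasDerivAt_rpow_const (Or.inl (ne_of_gt (ha.trans hx.1)))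
  obtain ⟨c, hc, hceq⟩ := exists_hasDerivAt_eq_slope (fun x : ℝ => x ^ s) _ hab hcont hderiv
  refine ⟨c, hc, ?_⟩
  have hb : b - a ≠ 0 := by intro h; linarith [hab]
  field_simp at hceq
  linarith [hceq]

/-- generalized second-difference bound: valid whenever `p * (p-1) ≥ 0` and `p ≤ 2`. -/
lemma dd_bound (p x : ℝ) (hp : 0 ≤ p * (p - 1)) (hp2 : p ≤ 2) (hx : 1 < x) :
    |(x + 1) ^ p - 2 * x ^ p + (x - 1) ^ p| ≤ 2 * (p * (p - 1)) * (x - 1) ^ (p - 2) := by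
  obtain ⟨c₁, hc₁, he₁⟩ := mvt_rpow p (x - 1) x (by linarith) (by linarith)
  obtain ⟨c₂, hc₂, he₂⟩ := mvt_rpow p x (x + 1) (by linarith) (by linarith)
  obtain ⟨d, hd, hed⟩ := mvt_rpow (p - 1) c₁ c₂ (by linarith [hc₁.1]) (hc₁.2.trans hc₂.1)
  have hx1 : (0:ℝ) < x - 1 := by linarith
  have h12 : p - 1 - 1 = p - 2 := by ring
  rw [h12] at hed
  have key : (x + 1) ^ p - 2 * x ^ p + (x - 1) ^ p
      = (p * (p - 1)) * (d ^ (p - 2) * (c₂ - c₁)) := by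
    linear_combination he₂ - he₁ + p * hed
  have hdpos : (0:ℝ) < d := by linarith [hc₁.1, hd.1]
  have hdb : d ^ (p - 2) ≤ (x - 1) ^ (p - 2) :=
    Real.rpow_le_rpow_of_nonpos hx1 (by linarith [hc₁.1, hd.1]) (by linarith)
  have hdp : (0:ℝ) ≤ d ^ (p - 2) := Real.rpow_nonneg hdpos.le _
  have hcc : (0:ℝ) ≤ c₂ - c₁ := by linarith [hc₁.2.trans hc₂.1]
  have hcc2 : c₂ - c₁ ≤ 2 := by linarith [hc₁.1, hc₂.2]
  have hnn : 0 ≤ (p * (p - 1)) * (d ^ (p - 2) * (c₂ - c₁)) :=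
    mul_nonneg hp (mul_nonneg hdp hcc)
  rw [key, abs_of_nonneg hnn]
  calc (p * (p - 1)) * (d ^ (p - 2) * (c₂ - c₁))
      ≤ (p * (p - 1)) * ((x - 1) ^ (p - 2) * 2) := by
        apply mul_le_mul_of_nonneg_left _ hp
        calc d ^ (p - 2) * (c₂ - c₁) ≤ (x - 1) ^ (p - 2) * (c₂ - c₁) :=
              mul_le_mul_of_nonneg_right hdb hcc
          _ ≤ (x - 1) ^ (p - 2) * 2 :=
              mul_le_mul_of_nonneg_left hcc2 (Real.rpow_nonneg hx1.le _)
    _ = 2 * (p * (p - 1)) * (x - 1) ^ (p - 2) := by ring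

/-- MVT for the second-difference function `x ↦ (x+1)^p - 2 x^p + (x-1)^p`. -/
lemma mvt_dd (p a b : ℝ) (ha : 1 < a) (hab : a < b) :
    ∃ c ∈ Set.Ioo a b,
      ((b + 1) ^ p - 2 * b ^ p + (b - 1) ^ p) - ((a + 1) ^ p - 2 * a ^ p + (a - 1) ^ p)
        = p * ((c + 1) ^ (p - 1) - 2 * c ^ (p - 1) + (c - 1) ^ (p - 1)) * (b - a) := by
  set F : ℝ → ℝ := fun x => (x + 1) ^ p - 2 * x ^ p + (x - 1) ^ p with hF
  have hD : ∀ x : ℝ, 1 < x →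
      HasDerivAt F (p * ((x + 1) ^ (p - 1) - 2 * x ^ (p - 1) + (x - 1) ^ (p - 1))) x := by
    intro x hx
    have h1 : HasDerivAt (fun x : ℝ => (x + 1) ^ p) (p * (x + 1) ^ (p - 1)) x := by
      have hxp : (0:ℝ) < x + 1 := by linarith
      have := (Real.hasDerivAt_rpow_const (x := x + 1) (p := p) (Or.inl hxp.ne'))
      simpa [Function.comp_def] using this.comp x ((hasDerivAt_id x).add_const 1)
    have hx0 : (0:ℝ) < x := by linarith
    have h2 : HasDerivAt (fun x : ℝ => x ^ p) (p * x ^ (p - 1)) x :=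
      Real.hasDerivAt_rpow_const (Or.inl hx0.ne')
    have h3 : HasDerivAt (fun x : ℝ => (x - 1) ^ p) (p * (x - 1) ^ (p - 1)) x := by
      have hx1 : (0:ℝ) < x - 1 := by linarith
      have := (Real.hasDerivAt_rpow_const (x := x - 1) (p := p) (Or.inl hx1.ne'))
      simpa [Function.comp_def] using this.comp x ((hasDerivAt_id x).sub_const 1)
    have := (h1.sub (h2.const_mul 2)).add h3
    convert this using 1
    all_goals first | rfl | ring
  have hcont : ContinuousOn F (Set.Icc a b) := fun x hx =>
    ((hD x (lt_of_lt_of_le ha hx.1)).continuousAt).continuousWithinAt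
  have hderiv : ∀ x ∈ Set.Ioo a b,
      HasDerivAt F (p * ((x + 1) ^ (p - 1) - 2 * x ^ (p - 1) + (x - 1) ^ (p - 1))) x :=
    fun x hx => hD x (ha.trans hx.1)
  obtain ⟨c, hc, hceq⟩ := exists_hasDerivAt_eq_slope F _ hab hcont hderiv
  refine ⟨c, hc, ?_⟩
  have hb : b - a ≠ 0 := by intro h; linarith [hab]
  field_simp at hceq
  simp only [hF] at hceq ⊢
  linarith [hceq]

set_option maxHeartbeats 1000000 in
lemma q_bound (s y : ℝ) (hs1 : 1 < s) (hs2 : s < 2) (hy : 1 ≤ y) :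
    |(y + 2 + 2) ^ s - 4 * (y + 2 + 1) ^ s + 6 * (y + 2) ^ s - 4 * (y + 2 - 1) ^ s
      + (y + 2 - 2) ^ s| ≤ 4 * ((s * (s - 1)) * ((s - 2) * (s - 3))) * y ^ (s - 4) := by
  obtain ⟨c₁, hc₁, he₁⟩ := mvt_dd s (y + 1) (y + 2) (by linarith) (by linarith)
  obtain ⟨c₂, hc₂, he₂⟩ := mvt_dd s (y + 2) (y + 3) (by linarith) (by linarith)
  obtain ⟨d, hd, hed⟩ := mvt_dd (s - 1) c₁ c₂ (by linarith [hc₁.1]) (hc₁.2.trans hc₂.1)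
  have h12 : s - 1 - 1 = s - 2 := by ring
  rw [h12] at hed
  obtain ⟨K, hK⟩ : ∃ K : ℝ, K = (d + 1) ^ (s - 2) - 2 * d ^ (s - 2) + (d - 1) ^ (s - 2) :=
    ⟨_, rfl⟩
  rw [← hK] at hed
  have key : (y + 2 + 2) ^ s - 4 * (y + 2 + 1) ^ s + 6 * (y + 2) ^ s - 4 * (y + 2 - 1) ^ s
      + (y + 2 - 2) ^ s = (s * (s - 1)) * (K * (c₂ - c₁)) := by
    linear_combination (norm := ring_nf) he₂ - he₁ + s * hed
  have hd1 : 1 < d := by linarith [hc₁.1, hd.1]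
  have hp : 0 ≤ (s - 2) * (s - 2 - 1) := by nlinarith
  have hKb := dd_bound (s - 2) d hp (by linarith) hd1
  have h34 : s - 2 - 1 = s - 3 := by ring
  have h44 : s - 2 - 2 = s - 4 := by ring
  rw [h34, h44, ← hK] at hKb
  have hy0 : (0:ℝ) < y := by linarith
  have hmono : (d - 1) ^ (s - 4) ≤ y ^ (s - 4) :=
    Real.rpow_le_rpow_of_nonpos hy0 (by linarith [hc₁.1, hd.1]) (by linarith)
  have hP : (0:ℝ) ≤ (s - 2) * (s - 3) := by nlinarith
  have hKbb : |K| ≤ 2 * ((s - 2) * (s - 3)) * y ^ (s - 4) := by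
    refine hKb.trans ?_
    have := mul_le_mul_of_nonneg_left hmono (by linarith : (0:ℝ) ≤ 2 * ((s - 2) * (s - 3)))
    linarith
  have hcc : (0:ℝ) ≤ c₂ - c₁ := by linarith [hc₁.2.trans hc₂.1]
  have hcc2 : c₂ - c₁ ≤ 2 := by linarith [hc₁.1, hc₂.2]
  have hS : (0:ℝ) ≤ s * (s - 1) := by nlinarith
  rw [key, abs_mul (s * (s - 1)), abs_of_nonneg hS, abs_mul K, abs_of_nonneg hcc]
  calc (s * (s - 1)) * (|K| * (c₂ - c₁))
      ≤ (s * (s - 1)) * ((2 * ((s - 2) * (s - 3)) * y ^ (s - 4)) * 2) := by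
        apply mul_le_mul_of_nonneg_left _ hS
        calc |K| * (c₂ - c₁) ≤ (2 * ((s - 2) * (s - 3)) * y ^ (s - 4)) * (c₂ - c₁) :=
              mul_le_mul_of_nonneg_right hKbb hcc
          _ ≤ (2 * ((s - 2) * (s - 3)) * y ^ (s - 4)) * 2 := by
              apply mul_le_mul_of_nonneg_left hcc2
              have := Real.rpow_nonneg hy0.le (s - 4)
              nlinarith
    _ = 4 * ((s * (s - 1)) * ((s - 2) * (s - 3))) * y ^ (s - 4) := by ring


theorem q_abs_summable (α : ℝ) (h1 : 1 < α) (h2 : α < 2) :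
    Summable (fun m : ℕ =>
      |((m : ℝ) + 2 + 2) ^ (3 - α) - 4 * ((m : ℝ) + 2 + 1) ^ (3 - α)
        + 6 * ((m : ℝ) + 2) ^ (3 - α) - 4 * ((m : ℝ) + 2 - 1) ^ (3 - α)
        + ((m : ℝ) + 2 - 2) ^ (3 - α)|) ∧
    ∀ u : ℕ → ℝ, (∃ C : ℝ, ∀ n, |u n| ≤ C) →
      Summable (fun n : ℕ => |Q α n * u n|) := by
  have hs1 : 1 < 3 - α := by linarith
  have hs2 : 3 - α < 2 := by linarith
  have hsum : Summable (fun m : ℕ =>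
      |((m : ℝ) + 2 + 2) ^ (3 - α) - 4 * ((m : ℝ) + 2 + 1) ^ (3 - α)
        + 6 * ((m : ℝ) + 2) ^ (3 - α) - 4 * ((m : ℝ) + 2 - 1) ^ (3 - α)
        + ((m : ℝ) + 2 - 2) ^ (3 - α)|) := by
    rw [← summable_nat_add_iff 1]
    have hb : Summable (fun n : ℕ =>
        4 * (((3 - α) * (3 - α - 1)) * ((3 - α - 2) * (3 - α - 3)))
          * ((n : ℝ) + 1) ^ (3 - α - 4)) := by
      apply Summable.mul_left
      have h0 : Summable (fun n : ℕ => ((n : ℝ)) ^ (3 - α - 4)) :=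
        Real.summable_nat_rpow.mpr (by linarith)
      have := (summable_nat_add_iff 1).mpr h0
      simpa [Nat.cast_add] using this
    refine Summable.of_nonneg_of_le (fun n => abs_nonneg _) (fun n => ?_) hb
    push_cast
    exact q_bound (3 - α) ((n : ℝ) + 1) hs1 hs2 (le_add_of_nonneg_left (Nat.cast_nonneg n))
  refine ⟨hsum, fun u hu => ?_⟩
  obtain ⟨C, hC⟩ := hu
  have hQ : Summable (fun n : ℕ => |Q α n|) := by
    rw [← summable_nat_add_iff 3]
    have heq : (fun n : ℕ => |Q α (n + 3)|) = (fun m : ℕ =>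
      |((m : ℝ) + 2 + 2) ^ (3 - α) - 4 * ((m : ℝ) + 2 + 1) ^ (3 - α)
        + 6 * ((m : ℝ) + 2) ^ (3 - α) - 4 * ((m : ℝ) + 2 - 1) ^ (3 - α)
        + ((m : ℝ) + 2 - 2) ^ (3 - α)|) := by
      funext n; simp [Q]
    rw [heq]
    exact hsum
  refine Summable.of_nonneg_of_le (fun n => abs_nonneg _) (fun n => ?_) (hQ.mul_right C)
  rw [abs_mul]
  exact mul_le_mul_of_nonneg_left (hC n) (abs_nonneg _)
end
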